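/- Let B be a closed, densely defined linear operator on H × H with domain Dom B. Suppose there exists λ ∈ ℂ such that B − λ maps Dom B bijectively onto H × H with bounded inverse R := (B − λ)^{−1}, and suppose that, writing R_{ij} := π_i ∘ R ∘ ι_j for i,j ∈ {1,2}, the operators R₁₁, R₁₂ and R₂₂ are compact operators on H. Then the set Σ := {μ ∈ ℂ : B − μ does not map Dom B bijectively onto H × H with bounded inverse} is a discrete subset of ℂ (it has no accumulation point in ℂ), every μ ∈ Σ is an eigenvalue of B (there exists a nonzero x ∈ Dom B with Bx = μx), and for every μ ∈ Σ the generalized eigenspace ⋃_{m ≥ 1} ker((B − μ)^m) is finite-dimensional, where ker((B − μ)^m) := {x ∈ H × H : x, (B−μ)x, …, (B−μ)^{m−1}x all lie in Dom B and (B−μ)^m x = 0}. -/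

import Mathlib

open MeasureTheory Filter Topology

noncomputable section
set_option maxHeartbeats 1000000
set_option linter.unusedSectionVars false

section AuxLemmas

variable {X : Type*} [NormedAddCommGroup X] [NormedSpace ℂ X] [CompleteSpace X]

lemma aux_no_sep_seq (K : X →L[ℂ] X) (hK : IsCompactOperator K) {c : ℝ} (hc : 0 < c)
    (x : ℕ → X) (hx : ∀ n, ‖x n‖ ≤ 1)
    (hsep : ∀ m n : ℕ, m < n → c ≤ ‖K (x n) - K (x m)‖) : False := by
  obtain ⟨Kset, hKset, hsub⟩ :=
    (hK : IsCompactOperator ⇑(K : X →ₗ[ℂ] X)).image_closedBall_subset_compact (σ₁₂ := RingHom.id ℂ) 1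
  have hy : ∀ n, K (x n) ∈ Kset := fun n =>
    hsub ⟨x n, by simpa [Metric.mem_closedBall, dist_zero_right] using hx n, rfl⟩
  obtain ⟨a, -, φ, hφ, hconv⟩ := hKset.isSeqCompact hy
  have hcauchy := hconv.cauchySeq
  rw [Metric.cauchySeq_iff] at hcauchy
  obtain ⟨N, hN⟩ := hcauchy c hc
  have h1 := hN (N + 1) (by omega) N (by omega)
  have h2 := hsep (φ N) (φ (N + 1)) (hφ (Nat.lt_succ_self N))
  rw [Function.comp_apply, Function.comp_apply, dist_eq_norm] at h1
  linarith

lemma aux_riesz_step {W V : Submodule ℂ X} (hW : IsClosed (W : Set X)) (hWV : W ≤ V)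
    {x : X} (hxV : x ∈ V) (hxW : x ∉ W) :
    ∃ e : X, ‖e‖ = 1 ∧ e ∈ V ∧ ∀ w ∈ W, (1:ℝ)/2 ≤ ‖e - w‖ := by
  set W' : Submodule ℂ V := W.comap V.subtype with hW'
  have hW'c : IsClosed (W' : Set V) := hW.preimage continuous_subtype_val
  have hex : ∃ v : V, v ∉ W' := ⟨⟨x, hxV⟩, by simpa [hW'] using hxW⟩
  obtain ⟨x₀, hx₀, hx₀d⟩ := riesz_lemma hW'c hex (r := 1/2) (by norm_num)
  have hx₀ne : (x₀ : X) ≠ 0 := by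
    intro h
    exact hx₀ (by simp [hW', Submodule.mem_comap, (by exact_mod_cast h : (x₀ : X) = 0)])
  have hn : (0:ℝ) < ‖(x₀ : X)‖ := norm_pos_iff.2 hx₀ne
  set a : ℂ := (‖(x₀ : X)‖ : ℂ) with ha
  have hane : a ≠ 0 := by
    rw [ha]; exact_mod_cast hn.ne'
  have hnorma : ‖a‖ = ‖(x₀ : X)‖ := by
    rw [ha]; simp [Complex.norm_real, abs_of_pos hn]
  refine ⟨a⁻¹ • (x₀ : X), ?_, V.smul_mem _ x₀.2, ?_⟩
  · rw [norm_smul, norm_inv, hnorma, inv_mul_cancel₀ hn.ne']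
  · intro w hw
    have hwV : w ∈ V := hWV hw
    have hmem : (⟨a • w, V.smul_mem _ hwV⟩ : V) ∈ W' := by
      simp [hW', Submodule.mem_comap]; exact W.smul_mem _ hw
    have hd := hx₀d _ hmem
    have hnorm : ‖x₀ - (⟨a • w, V.smul_mem _ hwV⟩ : V)‖ = ‖(x₀ : X) - a • w‖ := rfl
    have hnx₀ : ‖x₀‖ = ‖(x₀ : X)‖ := rfl
    rw [hnorm, hnx₀] at hd
    have heq : a⁻¹ • (x₀ : X) - w = a⁻¹ • ((x₀ : X) - a • w) := by
      rw [smul_sub, smul_smul, inv_mul_cancel₀ hane, one_smul]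
    rw [heq, norm_smul, norm_inv, hnorma]
    calc (1:ℝ)/2 = ‖(x₀:X)‖⁻¹ * ((1/2) * ‖(x₀:X)‖) := by field_simp
    _ ≤ ‖(x₀:X)‖⁻¹ * ‖(x₀ : X) - a • w‖ := by gcongr
    _ = _ := rfl

lemma aux_fredholm (K : X →L[ℂ] X) (hK : IsCompactOperator K)
    (hinj : ∀ u : X, (1 - K) u = 0 → u = 0) : IsUnit (1 - K : X →L[ℂ] X) := by
  set T : X →L[ℂ] X := 1 - K with hT
  have hTapp : ∀ u, T u = u - K u := fun u => by
    simp [hT, ContinuousLinearMap.sub_apply]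
  have hKapp : ∀ u, K u = u - T u := fun u => by rw [hTapp]; abel
  have hTinj : Function.Injective ⇑T := by
    intro u v huv
    have h0 : T (u - v) = 0 := by rw [map_sub, huv, sub_self]
    exact sub_eq_zero.mp (hinj _ h0)
  -- Step 1: T is bounded below
  have hbdd : ∃ c : ℝ, 0 < c ∧ ∀ u, c * ‖u‖ ≤ ‖T u‖ := by
    by_contra hcon
    push_neg at hcon
    have hex : ∀ n : ℕ, ∃ v : X, ‖T v‖ < (1/(n+1)) * ‖v‖ := by
      intro n
      obtain ⟨v, hv⟩ := hcon (1/(n+1)) (by positivity)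
      exact ⟨v, hv⟩
    choose v hv using hex
    have hvne : ∀ n, v n ≠ 0 := by
      intro n h
      have h2 := hv n
      rw [h] at h2
      simp at h2
    have hnr : ∀ r : ℝ, 0 ≤ r → ‖(r : ℂ)‖ = r := fun r hr => by
      simp [Complex.norm_real, abs_of_nonneg hr]
    set u : ℕ → X := fun n => ((‖v n‖ : ℂ))⁻¹ • v n with hu
    have hvnorm : ∀ n, (0:ℝ) < ‖v n‖ := fun n => norm_pos_iff.2 (hvne n)
    have hun : ∀ n, ‖u n‖ = 1 := by
      intro n
      rw [hu]
      simp only [norm_smul, norm_inv]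
      rw [hnr _ (norm_nonneg _), inv_mul_cancel₀ (hvnorm n).ne']
    have hTu : ∀ n, ‖T (u n)‖ ≤ 1/(n+1) := by
      intro n
      rw [hu]
      simp only [_root_.map_smul, norm_smul, norm_inv]
      rw [hnr _ (norm_nonneg _)]
      rw [inv_mul_le_iff₀ (hvnorm n)]
      calc ‖T (v n)‖ ≤ (1/(n+1)) * ‖v n‖ := (hv n).le
        _ = ‖v n‖ * (1/(n+1)) := by ring
        _ ≤ _ := by rw [mul_comm]
    obtain ⟨Kset, hKset, hsub⟩ :=
      (hK : IsCompactOperator ⇑(K : X →ₗ[ℂ] X)).image_closedBall_subset_compact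
        (σ₁₂ := RingHom.id ℂ) 1
    have hy : ∀ n, K (u n) ∈ Kset := fun n =>
      hsub ⟨u n, by simp [Metric.mem_closedBall, dist_zero_right, hun n], rfl⟩
    obtain ⟨b, -, φ, hφ, hconv⟩ := hKset.isSeqCompact hy
    have hTzero : Tendsto (fun n => T (u (φ n))) atTop (𝓝 0) := by
      refine squeeze_zero_norm (fun n => ?_) tendsto_one_div_add_atTop_nhds_zero_nat
      calc ‖T (u (φ n))‖ ≤ 1/(φ n + 1) := hTu (φ n)
        _ ≤ 1/(n+1) := by
          apply one_div_le_one_div_of_le (by positivity)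
          have h1 : (n:ℝ) ≤ (φ n : ℝ) := by exact_mod_cast hφ.le_apply
          linarith
    have hulim : Tendsto (fun n => u (φ n)) atTop (𝓝 b) := by
      have : (fun n => u (φ n)) = fun n => T (u (φ n)) + K (u (φ n)) := by
        funext n
        rw [hTapp]
        abel
      rw [this]
      simpa using hTzero.add hconv
    have hbnorm : ‖b‖ = 1 := by
      have h1 : Tendsto (fun n => ‖u (φ n)‖) atTop (𝓝 ‖b‖) := hulim.norm
      have h2 : Tendsto (fun n => ‖u (φ n)‖) atTop (𝓝 1) := by
        simp only [hun]
        exact tendsto_const_nhds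
      exact tendsto_nhds_unique h1 h2
    have hTb : T b = 0 := by
      have h1 : Tendsto (fun n => T (u (φ n))) atTop (𝓝 (T b)) :=
        (T.continuous.tendsto b).comp hulim
      exact tendsto_nhds_unique h1 hTzero
    have := hinj b hTb
    rw [this, norm_zero] at hbnorm
    norm_num at hbnorm
  obtain ⟨c, hc, hlb⟩ := hbdd
  -- Step 2: images of closed submodules are closed
  have himg : ∀ V : Submodule ℂ X, IsClosed (V : Set X) → IsClosed (⇑T '' (V : Set X)) := by
    intro V hV
    apply IsSeqClosed.isClosed
    intro ySeq yLim hySeq hyLim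
    have hex : ∀ n, ∃ w : X, w ∈ V ∧ T w = ySeq n := by
      intro n
      obtain ⟨w, hw1, hw2⟩ := hySeq n
      exact ⟨w, hw1, hw2⟩
    choose w hwV hwT using hex
    have hwc : CauchySeq w := by
      rw [Metric.cauchySeq_iff]
      intro ε hε
      have hyc := hyLim.cauchySeq
      rw [Metric.cauchySeq_iff] at hyc
      obtain ⟨N, hN⟩ := hyc (c * ε) (by positivity)
      refine ⟨N, fun m hm n hn => ?_⟩
      have := hN m hm n hn
      rw [dist_eq_norm] at this ⊢
      have hb := hlb (w m - w n)
      rw [map_sub, hwT, hwT] at hb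
      have : c * ‖w m - w n‖ < c * ε := lt_of_le_of_lt hb this
      exact lt_of_mul_lt_mul_left this hc.le
    obtain ⟨wLim, hwLim⟩ := cauchySeq_tendsto_of_complete hwc
    refine ⟨wLim, hV.mem_of_tendsto hwLim (Filter.Eventually.of_forall hwV), ?_⟩
    have h1 : Tendsto (fun n => T (w n)) atTop (𝓝 (T wLim)) :=
      (T.continuous.tendsto wLim).comp hwLim
    have h2 : Tendsto (fun n => T (w n)) atTop (𝓝 yLim) := by
      simpa only [hwT] using hyLim
    exact tendsto_nhds_unique h1 h2
  -- Step 3: surjectivity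
  have hTninj : ∀ n : ℕ, Function.Injective ⇑(T^n : X →L[ℂ] X) := by
    intro n
    induction n with
    | zero => simp [Function.Injective]
    | succ k ih =>
      intro a b hab
      rw [pow_succ] at hab
      simp only [ContinuousLinearMap.mul_apply] at hab
      exact hTinj (ih hab)
  set Vn : ℕ → Submodule ℂ X := fun n => LinearMap.range (((T^n : X →L[ℂ] X) : X →ₗ[ℂ] X)) with hVn
  have hTVn : ∀ (n : ℕ) (v : X), T ((T^n : X →L[ℂ] X) v) = (T^(n+1) : X →L[ℂ] X) v := by
    intro n v
    rw [pow_succ']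
    rfl
  have hTVn' : ∀ (n : ℕ) (v : X), (T^(n+1) : X →L[ℂ] X) v = (T^n : X →L[ℂ] X) (T v) := by
    intro n v
    rw [pow_succ]
    rfl
  have hVnset : ∀ n, (Vn (n+1) : Set X) = ⇑T '' (Vn n : Set X) := by
    intro n
    ext z
    simp only [Set.mem_image, SetLike.mem_coe, hVn, LinearMap.mem_range]
    constructor
    · rintro ⟨w, rfl⟩
      exact ⟨(T^n : X →L[ℂ] X) w, ⟨w, rfl⟩, hTVn n w⟩
    · rintro ⟨v, ⟨w, rfl⟩, rfl⟩
      exact ⟨w, (hTVn n w).symm⟩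
  have hVncl : ∀ n, IsClosed (Vn n : Set X) := by
    intro n
    induction n with
    | zero =>
      have h0 : (Vn 0 : Set X) = Set.univ := by
        ext z
        simp [hVn, LinearMap.mem_range]
      rw [h0]
      exact isClosed_univ
    | succ k ih =>
      rw [hVnset k]
      exact himg _ ih
  have hmono : ∀ n, Vn (n+1) ≤ Vn n := by
    rintro n z ⟨w, rfl⟩
    exact ⟨T w, (hTVn' n w).symm⟩
  have hmono' : ∀ m n, m ≤ n → Vn n ≤ Vn m := by
    intro m n h
    induction n, h using Nat.le_induction with
    | base => exact le_rfl
    | succ k hk ih => exact (hmono k).trans ih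
  have hTmem : ∀ (k : ℕ) (v : X), v ∈ Vn k → T v ∈ Vn (k+1) := by
    rintro k v ⟨w, rfl⟩
    exact ⟨w, (hTVn k w).symm⟩
  have hsurj : ∀ y : X, ∃ u : X, T u = y := by
    by_contra hcon
    push_neg at hcon
    obtain ⟨b, hb⟩ := hcon
    have hbn : ∀ n, (T^n : X →L[ℂ] X) b ∈ Vn n := fun n => ⟨b, rfl⟩
    have hbn' : ∀ n, (T^n : X →L[ℂ] X) b ∉ Vn (n+1) := by
      rintro n ⟨w, hw⟩
      apply hb w
      apply hTninj n
      rw [← hTVn' n w]; exact hw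
    have hstep := fun n => aux_riesz_step (hVncl (n+1)) (hmono n) (hbn n) (hbn' n)
    choose e he1 heV hed using hstep
    apply aux_no_sep_seq K hK (c := 1/2) (by norm_num) e (fun n => (he1 n).le)
    intro m n hmn
    rw [norm_sub_rev]
    have hKe : K (e m) - K (e n) = e m - (T (e m) + (e n - T (e n))) := by
      rw [hKapp, hKapp]
      abel
    rw [hKe]
    apply hed m
    refine Submodule.add_mem _ (hTmem m _ (heV m)) (Submodule.sub_mem _ ?_ ?_)
    · exact hmono' (m+1) n hmn (heV n)
    · exact hmono' (m+1) (n+1) (by omega) (hTmem n _ (heV n))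
  -- Step 4: conclude
  have hker : LinearMap.ker (T : X →ₗ[ℂ] X) = ⊥ := LinearMap.ker_eq_bot.mpr hTinj
  have hrange : LinearMap.range (T : X →ₗ[ℂ] X) = ⊤ := LinearMap.range_eq_top.mpr (fun y => hsurj y)
  let E := ContinuousLinearEquiv.ofBijective T hker hrange
  refine ⟨⟨T, (E.symm : X →L[ℂ] X), ?_, ?_⟩, rfl⟩
  · ext u
    simp only [ContinuousLinearMap.mul_apply, ContinuousLinearMap.one_apply,
      ContinuousLinearEquiv.coe_coe]
    have : T (E.symm u) = E (E.symm u) := rfl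
    rw [this, E.apply_symm_apply]
  · ext u
    simp only [ContinuousLinearMap.mul_apply, ContinuousLinearMap.one_apply,
      ContinuousLinearEquiv.coe_coe]
    have : E.symm (T u) = E.symm (E u) := rfl
    rw [this, E.symm_apply_apply]

lemma aux_ker_findim (K : X →L[ℂ] X) (hK : IsCompactOperator K) :
    FiniteDimensional ℂ (LinearMap.ker ((1 - K : X →L[ℂ] X) : X →ₗ[ℂ] X)) := by
  obtain ⟨Kset, hKset, hsub⟩ :=
    (hK : IsCompactOperator ⇑(K : X →ₗ[ℂ] X)).image_closedBall_subset_compact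
      (σ₁₂ := RingHom.id ℂ) 1
  set ker0 := LinearMap.ker ((1 - K : X →L[ℂ] X) : X →ₗ[ℂ] X) with hker0
  set S : Set X := (ker0 : Set X) ∩ Metric.closedBall 0 1 with hS
  have hfix : ∀ x ∈ ker0, K x = x := by
    intro x hx
    have h1 : (1 - K) x = 0 := hx
    rw [ContinuousLinearMap.sub_apply, ContinuousLinearMap.one_apply, sub_eq_zero] at h1
    exact h1.symm
  have hkercl : IsClosed (ker0 : Set X) := ContinuousLinearMap.isClosed_ker _
  have hScomp : IsCompact S := by
    apply hKset.of_isClosed_subset (hkercl.inter Metric.isClosed_closedBall)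
    rintro x ⟨hx1, hx2⟩
    exact hsub ⟨x, hx2, hfix x hx1⟩
  have hpre : Metric.closedBall (0 : ker0) 1 = (Subtype.val : ker0 → X) ⁻¹' S := by
    ext ⟨x, hx⟩
    simp [hS, Metric.mem_closedBall, dist_zero_right, hx]
  have hcomp : IsCompact (Metric.closedBall (0 : ker0) 1) := by
    rw [hpre]
    exact hkercl.isClosedEmbedding_subtypeVal.isCompact_preimage hScomp
  exact FiniteDimensional.of_isCompact_closedBall₀ ℂ one_pos hcomp

lemma aux_pow_compact (K : X →L[ℂ] X) (hK : IsCompactOperator K) (n : ℕ) :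
    IsCompactOperator ⇑(1 - (1 - K)^n : X →L[ℂ] X) := by
  induction n with
  | zero =>
    rw [pow_zero, sub_self]
    simpa using isCompactOperator_zero
  | succ k ih =>
    have heq : (1 : X →L[ℂ] X) - (1-K)^(k+1)
        = K + (1 - (1-K)^k) - (1 - (1-K)^k) * K := by
      rw [pow_succ]
      noncomm_ring
    rw [heq]
    have h1 : IsCompactOperator ⇑(((1 : X →L[ℂ] X) - (1-K)^k) * K) := by
      rw [FunLike.coe_mul_eq_comp]
      exact hK.clm_comp _
    simpa only [ContinuousLinearMap.coe_add', ContinuousLinearMap.coe_sub']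
      using (hK.add ih).sub h1

lemma aux_gen_ker (K : X →L[ℂ] X) (hK : IsCompactOperator K) :
    ∃ n : ℕ, FiniteDimensional ℂ (LinearMap.ker (((1 - K)^n : X →L[ℂ] X) : X →ₗ[ℂ] X)) ∧
      ∀ m : ℕ, LinearMap.ker ((((1:X →L[ℂ] X)-K)^m : X →L[ℂ] X) : X →ₗ[ℂ] X)
        ≤ LinearMap.ker (((1-K)^n : X →L[ℂ] X) : X →ₗ[ℂ] X) := by
  set T : X →L[ℂ] X := 1 - K with hT
  have hKapp : ∀ u, K u = u - T u := fun u => by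
    simp [hT, ContinuousLinearMap.sub_apply]
  have hTpow1 : ∀ (n : ℕ) (x : X), (T^(n+1) : X →L[ℂ] X) x = T ((T^n : X →L[ℂ] X) x) := by
    intro n x; rw [pow_succ']; rfl
  have hTpow2 : ∀ (n : ℕ) (x : X), (T^(n+1) : X →L[ℂ] X) x = (T^n : X →L[ℂ] X) (T x) := by
    intro n x; rw [pow_succ]; rfl
  set N : ℕ → Submodule ℂ X := fun n => LinearMap.ker ((T^n : X →L[ℂ] X) : X →ₗ[ℂ] X) with hN
  have hmem : ∀ (n : ℕ) (x : X), x ∈ N n ↔ (T^n : X →L[ℂ] X) x = 0 := fun n x => Iff.rfl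
  have hmono : ∀ n, N n ≤ N (n+1) := by
    intro n x hx
    rw [hmem] at hx ⊢
    rw [hTpow1, hx, map_zero]
  have hmono' : ∀ m n, m ≤ n → N m ≤ N n := by
    intro m n h
    induction n, h using Nat.le_induction with
    | base => exact le_rfl
    | succ k hk ih => exact ih.trans (hmono k)
  have hfd : ∀ n, FiniteDimensional ℂ (N n) := by
    intro n
    have h := aux_ker_findim (1 - T^n) (aux_pow_compact K hK n)
    rwa [sub_sub_cancel] at h
  have hTmemN : ∀ (n : ℕ) (x : X), x ∈ N (n+1) → T x ∈ N n := by
    intro n x hx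
    rw [hmem] at hx ⊢
    rw [← hTpow2, hx]
  have hcl : ∀ n, IsClosed (N n : Set X) := fun n => ContinuousLinearMap.isClosed_ker _
  have hstab : ∃ n, N (n+1) ≤ N n := by
    by_contra hcon
    push_neg at hcon
    have hex : ∀ n, ∃ x, x ∈ N (n+1) ∧ x ∉ N n := by
      intro n
      obtain ⟨x, hx1, hx2⟩ := SetLike.not_le_iff_exists.mp (hcon n)
      exact ⟨x, hx1, hx2⟩
    choose v hv1 hv2 using hex
    have hstep := fun n => aux_riesz_step (hcl n) (hmono n) (hv1 n) (hv2 n)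
    choose e he1 heV hed using hstep
    apply aux_no_sep_seq K hK (c := 1/2) (by norm_num) e (fun n => (he1 n).le)
    intro m n hmn
    have hKe : K (e n) - K (e m) = e n - (T (e n) + (e m - T (e m))) := by
      rw [hKapp, hKapp]
      abel
    rw [hKe]
    apply hed n
    refine Submodule.add_mem _ (hTmemN n _ (heV n)) (Submodule.sub_mem _ ?_ ?_)
    · exact hmono' (m+1) n hmn (heV m)
    · exact hmono' m n hmn.le (hTmemN m _ (heV m))
  obtain ⟨n, hn⟩ := hstab
  have hdown : ∀ k, n ≤ k → N (k+1) ≤ N k := by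
    intro k hk
    induction k, hk using Nat.le_induction with
    | base => exact hn
    | succ j hj ih =>
      intro x hx
      have h1 : T x ∈ N (j+1) := hTmemN (j+1) x hx
      have h2 : T x ∈ N j := ih h1
      rw [hmem] at h2 ⊢
      rw [hTpow2]
      exact h2
  have hall : ∀ m, N m ≤ N n := by
    intro m
    by_cases h : m ≤ n
    · exact hmono' m n h
    · push_neg at h
      have : ∀ k, n ≤ k → N k ≤ N n := by
        intro k hk
        induction k, hk using Nat.le_induction with
        | base => exact le_rfl
        | succ j hj ih => exact (hdown j hj).trans ih
      exact this m h.le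
  exact ⟨n, hfd n, hall⟩

lemma aux_expand {A : Type*} [Ring A] (a b : A) :
    (1 - a) * (1 - b) = 1 - b - a + a * b := by noncomm_ring

lemma aux_expand2 {A : Type*} [Ring A] (a : A) :
    (1 - a) * (1 + a) = 1 - a * a ∧ (1 + a) * (1 - a) = 1 - a * a := by
  constructor <;> noncomm_ring

lemma aux_fact {A : Type*} [Ring A] [Module ℂ A] [SMulCommClass ℂ A A] [IsScalarTower ℂ A A]
    (C N : A) (z : ℂ) (hNN : N * N = 0) :
    (1 - z • N) * (1 - (z • C + (z*z) • (N * C))) = 1 - z • (C + N) := by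
  have hNNC : N * (N * C) = 0 := by rw [← mul_assoc, hNN, zero_mul]
  have hab : (z • N) * (z • C + (z*z) • (N * C)) = (z*z) • (N * C) := by
    rw [mul_add, smul_mul_assoc, mul_smul_comm, smul_smul, smul_mul_assoc, mul_smul_comm,
      smul_smul, hNNC, smul_zero, add_zero]
  rw [aux_expand, hab, smul_add]
  abel

lemma aux_nilp_unit {A : Type*} [Ring A] [Module ℂ A] [SMulCommClass ℂ A A]
    [IsScalarTower ℂ A A] (N : A) (z : ℂ) (hNN : N * N = 0) :
    IsUnit (1 - z • N) := by
  have haa : (z • N) * (z • N) = 0 := by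
    rw [smul_mul_assoc, mul_smul_comm, smul_smul, hNN, smul_zero]
  refine ⟨⟨1 - z • N, 1 + z • N, ?_, ?_⟩, rfl⟩
  · rw [(aux_expand2 (z • N)).1, haa, sub_zero]
  · rw [(aux_expand2 (z • N)).2, haa, sub_zero]

end AuxLemmas

/-- upper-triangular-compact resolvent theorem, special case of
Theorem 3.5 of Sylvester: if a closed densely defined operator B on H × H has, at
some point λ, a bounded inverse (B − λ)⁻¹ whose matrix components R₁₁, R₁₂, R₂₂ are
compact, then the spectrum of B is a discrete set of eigenvalues with
finite-dimensional generalized eigenspaces. -/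
theorem utc_resolvent_spectrum_discrete
    (H : Type) [NormedAddCommGroup H] [InnerProductSpace ℂ H] [CompleteSpace H]
    (Dom : Submodule ℂ (H × H)) (B : Dom →ₗ[ℂ] (H × H))
    (hdense : Dense (Dom : Set (H × H)))
    (hclosed : IsClosed {p : (H × H) × (H × H) | ∃ h : p.1 ∈ Dom, B ⟨p.1, h⟩ = p.2})
    (lam : ℂ) (R : (H × H) →L[ℂ] (H × H))
    (hRmem : ∀ y, R y ∈ Dom)
    (hRright : ∀ y : H × H, B ⟨R y, hRmem y⟩ - lam • (R y) = y)
    (hRleft : ∀ x : Dom, R (B x - lam • (x : H × H)) = (x : H × H))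
    (hR11 : IsCompactOperator (fun x : H => (R (x, 0)).1))
    (hR12 : IsCompactOperator (fun x : H => (R (0, x)).1))
    (hR22 : IsCompactOperator (fun x : H => (R (0, x)).2)) :
    -- resolvent set predicate: B − m has a bounded two-sided inverse
    let Res : ℂ → Prop := fun m =>
      ∃ S : (H × H) →L[ℂ] (H × H), ∃ hS : ∀ y, S y ∈ Dom,
        (∀ y : H × H, B ⟨S y, hS y⟩ - m • (S y) = y) ∧
        (∀ x : Dom, S (B x - m • (x : H × H)) = (x : H × H))
    let Spec : Set ℂ := {m | ¬ Res m}
    -- the spectrum is discrete,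
    (∀ z : ℂ, ¬ AccPt z (Filter.principal Spec)) ∧
    -- consists of eigenvalues of B,
    (∀ m ∈ Spec, ∃ x : Dom, (x : H × H) ≠ 0 ∧ B x = m • (x : H × H)) ∧
    -- and the generalized eigenspaces are finite dimensional
    (∀ m ∈ Spec, FiniteDimensional ℂ (Submodule.span ℂ
      {x : H × H | ∃ mm : ℕ, 1 ≤ mm ∧ ∃ y : ℕ → H × H, y 0 = x ∧ y mm = 0 ∧
        ∀ j < mm, ∃ h : y j ∈ Dom, y (j + 1) = B ⟨y j, h⟩ - m • (y j)})) := by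
  intro Res Spec
  -- the nilpotent and compact pieces of R
  set Nop : (H × H) →L[ℂ] (H × H) :=
    (ContinuousLinearMap.inr ℂ H H).comp ((ContinuousLinearMap.snd ℂ H H).comp
      (R.comp ((ContinuousLinearMap.inl ℂ H H).comp (ContinuousLinearMap.fst ℂ H H))))
    with hNopdef
  have hNapp : ∀ p : H × H, Nop p = ((0 : H), (R (p.1, 0)).2) := fun p => rfl
  set Cop : (H × H) →L[ℂ] (H × H) := R - Nop with hCopdef
  have hRC : R = Cop + Nop := by rw [hCopdef]; abel
  have hNN : Nop * Nop = 0 := by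
    refine ContinuousLinearMap.ext fun p => ?_
    show ((0:H), (R (0 : H × H)).2) = (0 : H × H)
    rw [map_zero]
    rfl
  -- compactness of Cop
  have hsplit : ∀ p : H × H, R p = R (p.1, 0) + R (0, p.2) := by
    intro p
    rw [← map_add]
    congr 1
    simp [Prod.mk_add_mk]
  have hCcomp : IsCompactOperator ⇑Cop := by
    have hf1 : IsCompactOperator (fun p : H × H => (((R (p.1, 0)).1 : H), (0:H))) :=
      (hR11.comp_clm (ContinuousLinearMap.fst ℂ H H)).clm_comp
        (ContinuousLinearMap.inl ℂ H H)
    have hf2 : IsCompactOperator (fun p : H × H => (((R (0, p.2)).1 : H), (0:H))) :=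
      (hR12.comp_clm (ContinuousLinearMap.snd ℂ H H)).clm_comp
        (ContinuousLinearMap.inl ℂ H H)
    have hf3 : IsCompactOperator (fun p : H × H => ((0:H), ((R (0, p.2)).2 : H))) :=
      (hR22.comp_clm (ContinuousLinearMap.snd ℂ H H)).clm_comp
        (ContinuousLinearMap.inr ℂ H H)
    have hsum := (hf1.add hf2).add hf3
    have heq : ⇑Cop = (fun p : H × H => (((R (p.1, 0)).1 : H), (0:H)))
        + (fun p : H × H => (((R (0, p.2)).1 : H), (0:H)))
        + (fun p : H × H => ((0:H), ((R (0, p.2)).2 : H))) := by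
      funext p
      rw [hCopdef]
      simp only [ContinuousLinearMap.coe_sub', Pi.sub_apply, Pi.add_apply, hNapp]
      rw [hsplit p]
      apply Prod.ext <;> simp
    rw [heq]
    exact hsum
  -- compactness of R ∘ R
  have hQcomp : IsCompactOperator ⇑(R * R) := by
    have hexp : (Cop + Nop) * (Cop + Nop) = Cop * (Cop + Nop) + Nop * Cop + Nop * Nop := by
      noncomm_ring
    have hRR : R * R = Cop * R + Nop * Cop := by
      nth_rewrite 1 [hRC]; nth_rewrite 1 [hRC]
      rw [hexp, hNN, add_zero, ← hRC]
    have h1 : IsCompactOperator ⇑(Cop * R) := by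
      rw [FunLike.coe_mul_eq_comp]
      exact hCcomp.comp_clm R
    have h2 : IsCompactOperator ⇑(Nop * Cop) := by
      rw [FunLike.coe_mul_eq_comp]
      exact hCcomp.clm_comp Nop
    rw [hRR]
    simpa only [ContinuousLinearMap.coe_add'] using h1.add h2
  -- bridge: invertibility of 1 - (m - lam) • R gives membership in the resolvent set
  have hres_of_unit : ∀ m : ℂ, IsUnit (1 - (m - lam) • R) → Res m := by
    intro m hu
    obtain ⟨u, hu⟩ := hu
    set z : ℂ := m - lam with hzdef
    have hcomm : Commute R ((1 : (H × H) →L[ℂ] (H × H)) - z • R) := by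
      show R * (1 - z • R) = (1 - z • R) * R
      rw [mul_sub, sub_mul, mul_one, one_mul, mul_smul_comm, smul_mul_assoc]
    have hcu : Commute R (↑u : (H × H) →L[ℂ] (H × H)) := by rw [hu]; exact hcomm
    have hcui : Commute R (↑u⁻¹ : (H × H) →L[ℂ] (H × H)) := hcu.units_inv_right
    set Qi : (H × H) →L[ℂ] (H × H) := ↑u⁻¹ with hQidef
    have hright : ((1 : (H × H) →L[ℂ] (H × H)) - z • R) * Qi = 1 := by
      rw [← hu]; exact u.mul_inv
    have hleft : Qi * ((1 : (H × H) →L[ℂ] (H × H)) - z • R) = 1 := by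
      rw [← hu]; exact u.inv_mul
    set S : (H × H) →L[ℂ] (H × H) := R * Qi with hSdef
    have hSmem : ∀ y, S y ∈ Dom := fun y => hRmem (Qi y)
    have hSapp : ∀ y, S y = R (Qi y) := fun y => rfl
    have hSapp2 : ∀ y, S y = Qi (R y) := by
      intro y
      show (R * Qi) y = Qi (R y)
      rw [hcui.eq]
      rfl
    have hmsmul : ∀ v : H × H, m • v = z • v + lam • v := by
      intro v
      rw [← add_smul]
      congr 1
      rw [hzdef]; ring
    refine ⟨S, hSmem, ?_, ?_⟩
    · intro y
      have e1 : (⟨S y, hSmem y⟩ : Dom) = ⟨R (Qi y), hRmem (Qi y)⟩ := rfl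
      rw [e1]
      have h2 := hRright (Qi y)
      have h3 : B ⟨R (Qi y), hRmem (Qi y)⟩ = Qi y + lam • R (Qi y) :=
        sub_eq_iff_eq_add.mp h2
      rw [h3, hSapp, hmsmul]
      have h4 : Qi y + lam • R (Qi y) - (z • R (Qi y) + lam • R (Qi y))
          = Qi y - z • R (Qi y) := by abel
      rw [h4]
      have h5 : Qi y - z • R (Qi y)
          = (((1 : (H × H) →L[ℂ] (H × H)) - z • R) * Qi) y := by
        simp [ContinuousLinearMap.mul_apply, ContinuousLinearMap.sub_apply]
      rw [h5, hright]
      rfl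
    · intro x
      have h1 : B x - m • (x : H × H) = (B x - lam • (x : H × H)) - z • (x : H × H) := by
        rw [hmsmul]; abel
      rw [h1, map_sub, _root_.map_smul, hSapp2, hSapp2, hRleft x]
      have h6 : Qi (x : H × H) - z • Qi (R (x : H × H))
          = Qi ((x : H × H) - z • R (x : H × H)) := by
        rw [map_sub, _root_.map_smul]
      rw [h6]
      have h7 : (x : H × H) - z • R (x : H × H)
          = (((1 : (H × H) →L[ℂ] (H × H)) - z • R)) (x : H × H) := by
        simp [ContinuousLinearMap.sub_apply]
      rw [h7]
      have h8 : Qi ((((1 : (H × H) →L[ℂ] (H × H)) - z • R)) (x : H × H))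
          = (Qi * ((1 : (H × H) →L[ℂ] (H × H)) - z • R)) (x : H × H) := rfl
      rw [h8, hleft]
      rfl
  have hnotunit : ∀ m ∈ Spec, ¬ IsUnit (1 - (m - lam) • R) :=
    fun m hm hu => hm (hres_of_unit m hu)
  have hzne : ∀ m ∈ Spec, m - lam ≠ 0 := by
    intro m hm h0
    apply hnotunit m hm
    rw [h0, zero_smul, sub_zero]
    exact isUnit_one
  -- eigenvector of R from spectral points
  have h_eig : ∀ m ∈ Spec, ∃ u : H × H, u ≠ 0 ∧ R u = (m - lam)⁻¹ • u := by
    intro m hm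
    set z : ℂ := m - lam with hzdef
    have hz : z ≠ 0 := hzne m hm
    set Kz : (H × H) →L[ℂ] (H × H) := z • Cop + (z*z) • (Nop * Cop) with hKzdef
    have hKzcomp : IsCompactOperator ⇑Kz := by
      have h1 : IsCompactOperator ⇑(z • Cop) := by
        have := hCcomp.smul z
        simpa only [ContinuousLinearMap.coe_smul'] using this
      have h2 : IsCompactOperator ⇑((z*z) • (Nop * Cop)) := by
        have h2a : IsCompactOperator ⇑(Nop * Cop) := by
          rw [FunLike.coe_mul_eq_comp]
          exact hCcomp.clm_comp Nop
        have := h2a.smul (z*z)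
        simpa only [ContinuousLinearMap.coe_smul'] using this
      simpa only [ContinuousLinearMap.coe_add', hKzdef] using h1.add h2
    have hfact : ((1 : (H × H) →L[ℂ] (H × H)) - z • Nop) * (1 - Kz) = 1 - z • R := by
      rw [hKzdef, hRC]
      exact aux_fact Cop Nop z hNN
    have hunitN : IsUnit ((1 : (H × H) →L[ℂ] (H × H)) - z • Nop) :=
      aux_nilp_unit Nop z hNN
    have hKznu : ¬ IsUnit ((1 : (H × H) →L[ℂ] (H × H)) - Kz) := by
      intro h
      apply hnotunit m hm
      rw [← hzdef, ← hfact]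
      exact hunitN.mul h
    have hne := mt (aux_fredholm Kz hKzcomp) hKznu
    push_neg at hne
    obtain ⟨u, hu1, hu2⟩ := hne
    refine ⟨u, hu2, ?_⟩
    have hzero : ((1 : (H × H) →L[ℂ] (H × H)) - z • R) u = 0 := by
      rw [← hfact]
      have : (((1 : (H × H) →L[ℂ] (H × H)) - z • Nop) * (1 - Kz)) u
          = ((1 : (H × H) →L[ℂ] (H × H)) - z • Nop) ((1 - Kz) u) := rfl
      rw [this, hu1, map_zero]
    have h9 : u - z • R u = 0 := by
      rw [← hzero]
      simp [ContinuousLinearMap.sub_apply]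
    have h10 : z • R u = u := by
      rw [sub_eq_zero] at h9
      exact h9.symm
    conv_rhs => rw [← h10]
    rw [inv_smul_smul₀ hz]
  refine ⟨?_, ?_, ?_⟩
  · -- Part 1 : discreteness
    intro z₀ hAcc
    rw [accPt_iff_nhds] at hAcc
    set Sfin : Set ℂ := (Spec ∩ Metric.ball z₀ 1) \ {z₀} with hSfindef
    have hinf : Sfin.Infinite := by
      intro hfin
      have hUopen : IsOpen (Metric.ball z₀ 1 \ Sfin) := Metric.isOpen_ball.sdiff hfin.isClosed
      have hz₀U : z₀ ∈ Metric.ball z₀ 1 \ Sfin :=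
        ⟨Metric.mem_ball_self one_pos, fun h => h.2 rfl⟩
      obtain ⟨y, ⟨hyU, hySpec⟩, hyne⟩ := hAcc _ (hUopen.mem_nhds hz₀U)
      exact hyU.2 ⟨⟨hySpec, hyU.1⟩, hyne⟩
    set emb := hinf.natEmbedding with hembdef
    set msq : ℕ → ℂ := fun n => (emb n : ℂ) with hmsqdef
    have hm_inj : Function.Injective msq := fun a b h => emb.injective (Subtype.ext h)
    have hm_spec : ∀ n, msq n ∈ Spec := fun n => ((emb n).2.1).1
    have hm_ball : ∀ n, dist (msq n) z₀ < 1 := fun n => ((emb n).2.1).2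
    set zsq : ℕ → ℂ := fun n => msq n - lam with hzsqdef
    have hz_inj : Function.Injective zsq := by
      intro a b h
      apply hm_inj
      have h' : msq a - lam = msq b - lam := h
      rwa [sub_left_inj] at h'
    have hz_ne : ∀ n, zsq n ≠ 0 := fun n => hzne _ (hm_spec n)
    choose u hu0 hRu using fun n => h_eig (msq n) (hm_spec n)
    set Mb : ℝ := ‖z₀ - lam‖ + 1 with hMbdef
    have hMbpos : 0 < Mb := by positivity
    have hzb : ∀ n, ‖zsq n‖ ≤ Mb := by
      intro n
      have h0 : zsq n = (msq n - z₀) + (z₀ - lam) := by rw [hzsqdef]; abel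
      have h1 : ‖zsq n‖ ≤ ‖msq n - z₀‖ + ‖z₀ - lam‖ := by
        rw [h0]; exact norm_add_le _ _
      have h2 : ‖msq n - z₀‖ < 1 := by rw [← dist_eq_norm]; exact hm_ball n
      rw [hMbdef]; linarith
    have hw_inj : Function.Injective (fun n => (zsq n)⁻¹) := by
      intro a b h
      exact hz_inj (inv_injective h)
    have hlin : LinearIndependent ℂ u := by
      apply Module.End.eigenvectors_linearIndependent' (R : (H × H) →ₗ[ℂ] (H × H))
        (fun n => (zsq n)⁻¹) hw_inj
      intro i
      refine ⟨Module.End.mem_eigenspace_iff.mpr ?_, hu0 i⟩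
      show R (u i) = (zsq i)⁻¹ • u i
      exact hRu i
    set M : ℕ → Submodule ℂ (H × H) := fun n => Submodule.span ℂ (u '' Set.Iio n) with hMdef
    have hMfd : ∀ n, FiniteDimensional ℂ (M n) := fun n =>
      FiniteDimensional.span_of_finite ℂ ((Set.finite_Iio n).image u)
    have hMcl : ∀ n, IsClosed ((M n : Set (H × H))) := fun n =>
      letI := hMfd n
      Submodule.closed_of_finiteDimensional _
    have hMmono : ∀ a b : ℕ, a ≤ b → M a ≤ M b := fun a b h =>
      Submodule.span_mono (Set.image_mono (Set.Iio_subset_Iio h))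
    have humem : ∀ n, u n ∈ M (n+1) := fun n =>
      Submodule.subset_span ⟨n, Nat.lt_succ_self n, rfl⟩
    have hunot : ∀ n, u n ∉ M n := fun n => hlin.notMem_span_image (by simp)
    set Q : (H × H) →L[ℂ] (H × H) := R * R with hQdef
    have hQu : ∀ i, Q (u i) = ((zsq i)⁻¹ * (zsq i)⁻¹) • u i := by
      intro i
      show R (R (u i)) = _
      rw [hRu i, _root_.map_smul, hRu i, smul_smul]
    have hQM : ∀ n, ∀ v ∈ M (n+1), Q v - ((zsq n)⁻¹ * (zsq n)⁻¹) • v ∈ M n := by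
      intro n
      have hle : M (n+1) ≤ Submodule.comap
          ((Q : (H × H) →ₗ[ℂ] (H × H)) - ((zsq n)⁻¹ * (zsq n)⁻¹) • LinearMap.id) (M n) := by
        rw [hMdef]
        apply Submodule.span_le.mpr
        rintro _ ⟨i, hi, rfl⟩
        simp only [SetLike.mem_coe, Submodule.mem_comap, LinearMap.sub_apply,
          LinearMap.smul_apply, LinearMap.id_apply, ContinuousLinearMap.coe_coe]
        rw [hQu i, ← sub_smul]
        rcases Nat.lt_succ_iff_lt_or_eq.mp hi with h | h
        · exact Submodule.smul_mem _ _ (Submodule.subset_span ⟨i, h, rfl⟩)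
        · rw [h, sub_self, zero_smul]
          exact Submodule.zero_mem _
      intro v hv
      have h := hle hv
      simpa only [Submodule.mem_comap, LinearMap.sub_apply, LinearMap.smul_apply,
        LinearMap.id_apply, ContinuousLinearMap.coe_coe] using h
    have hriesz := fun n =>
      aux_riesz_step (hMcl n) (hMmono n (n+1) (Nat.le_succ n)) (humem n) (hunot n)
    choose e he1 heM hed using hriesz
    have hcpos : (0:ℝ) < (Mb⁻¹ * Mb⁻¹)/2 := by positivity
    apply aux_no_sep_seq Q hQcomp hcpos e (fun n => (he1 n).le)
    intro m n hmn
    set cn : ℂ := (zsq n)⁻¹ * (zsq n)⁻¹ with hcndef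
    have hcn0 : cn ≠ 0 := mul_ne_zero (inv_ne_zero (hz_ne n)) (inv_ne_zero (hz_ne n))
    have h1 : Q (e n) - cn • e n ∈ M n := hQM n _ (heM n)
    have h2 : Q (e m) ∈ M n := by
      have h2a := hQM m _ (heM m)
      have h2b : Q (e m) = (Q (e m) - ((zsq m)⁻¹ * (zsq m)⁻¹) • e m)
          + ((zsq m)⁻¹ * (zsq m)⁻¹) • e m := by abel
      rw [h2b]
      exact Submodule.add_mem _ (hMmono m n hmn.le h2a)
        (Submodule.smul_mem _ _ (hMmono (m+1) n hmn (heM m)))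
    set w : H × H := cn • e n - (Q (e n) - Q (e m)) with hwdef
    have hwM : w ∈ M n := by
      have h3 : w = -(Q (e n) - cn • e n) + Q (e m) := by rw [hwdef]; abel
      rw [h3]
      exact Submodule.add_mem _ (Submodule.neg_mem _ h1) h2
    have hfac : Q (e n) - Q (e m) = cn • (e n - cn⁻¹ • w) := by
      rw [smul_sub, smul_inv_smul₀ hcn0, hwdef]; abel
    rw [hfac, norm_smul]
    have hlow := hed n _ (Submodule.smul_mem _ cn⁻¹ hwM)
    have hcnlow : Mb⁻¹ * Mb⁻¹ ≤ ‖cn‖ := by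
      rw [hcndef, norm_mul, norm_inv]
      have hinv : Mb⁻¹ ≤ ‖zsq n‖⁻¹ :=
        inv_anti₀ (norm_pos_iff.mpr (hz_ne n)) (hzb n)
      have h0 : (0:ℝ) ≤ Mb⁻¹ := by positivity
      exact mul_le_mul hinv hinv h0 (by positivity)
    calc (Mb⁻¹ * Mb⁻¹)/2 = (Mb⁻¹ * Mb⁻¹) * (1/2) := by ring
      _ ≤ ‖cn‖ * ‖e n - cn⁻¹ • w‖ :=
        mul_le_mul hcnlow hlow (by norm_num) (norm_nonneg _)
  · -- Part 2 : eigenvalues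
    intro m hm
    obtain ⟨u, hu0, hRu⟩ := h_eig m hm
    have hz : m - lam ≠ 0 := hzne m hm
    refine ⟨⟨R u, hRmem u⟩, ?_, ?_⟩
    · show R u ≠ 0
      rw [hRu]
      exact smul_ne_zero (inv_ne_zero hz) hu0
    · show B ⟨R u, hRmem u⟩ = m • R u
      have h3 : B ⟨R u, hRmem u⟩ = u + lam • R u := sub_eq_iff_eq_add.mp (hRright u)
      rw [h3]
      have h4 : m • R u = (m - lam) • R u + lam • R u := by
        rw [← add_smul, sub_add_cancel]
      rw [h4, hRu, smul_inv_smul₀ hz]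
  · -- Part 3 : finite-dimensional generalized eigenspaces
    intro m hm
    set z : ℂ := m - lam with hzdef
    set Kp : (H × H) →L[ℂ] (H × H) := (z*z) • (R * R) with hKpdef
    have hKpc : IsCompactOperator ⇑Kp := by
      have h := hQcomp.smul (z*z)
      simpa only [ContinuousLinearMap.coe_smul', hKpdef] using h
    obtain ⟨n₀, hfd, hall⟩ := aux_gen_ker Kp hKpc
    set A : (H × H) →L[ℂ] (H × H) := 1 - z • R with hAdef
    set A' : (H × H) →L[ℂ] (H × H) := 1 + z • R with hA'def
    have hsm : (z • R) * (z • R) = (z*z) • (R * R) := by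
      rw [smul_mul_assoc, mul_smul_comm, smul_smul]
    have hAA' : (1 : (H × H) →L[ℂ] (H × H)) - Kp = A' * A := by
      rw [hA'def, hAdef, (aux_expand2 (z • R)).2, hsm, hKpdef]
    haveI := hfd
    apply Submodule.finiteDimensional_of_le (S₂ := LinearMap.ker (((1 - Kp)^n₀ : (H × H) →L[ℂ] (H × H)) : (H × H) →ₗ[ℂ] (H × H)))
    apply Submodule.span_le.mpr
    rintro x ⟨mm, hmm1, y, hy0, hymm, hchain⟩
    have hstep : ∀ j, j < mm → A (y j) = R (y (j+1)) := by
      intro j hj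
      obtain ⟨hmemj, heqj⟩ := hchain j hj
      have hmsmul : m • y j = z • y j + lam • y j := by
        rw [← add_smul]
        congr 1
        rw [hzdef]; ring
      have h1 : y (j+1) = (B ⟨y j, hmemj⟩ - lam • y j) - z • y j := by
        rw [heqj, hmsmul]; abel
      have h2 : R (y (j+1)) = R (B ⟨y j, hmemj⟩ - lam • y j) - z • R (y j) := by
        rw [h1, map_sub, _root_.map_smul]
      have h3 : R (B ⟨y j, hmemj⟩ - lam • y j) = y j := hRleft ⟨y j, hmemj⟩
      rw [h2, h3]
      simp [hAdef, ContinuousLinearMap.sub_apply]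
    have hcomm : Commute R A := by
      rw [hAdef]
      show R * (1 - z • R) = (1 - z • R) * R
      rw [mul_sub, sub_mul, mul_one, one_mul, mul_smul_comm, smul_mul_assoc]
    have hpow : ∀ k j, j + k ≤ mm → (A^k) (y j) = (R^k) (y (j+k)) := by
      intro k
      induction k with
      | zero => intro j h; simp
      | succ i ih =>
        intro j hjk
        have h1 : (A^(i+1)) (y j) = (A^i) (A (y j)) := by rw [pow_succ]; rfl
        rw [h1, hstep j (by omega)]
        have hci : Commute R (A^i) := hcomm.pow_right i
        have h2 : (A^i) (R (y (j+1))) = R ((A^i) (y (j+1))) :=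
          (congrArg (fun T : (H × H) →L[ℂ] (H × H) => T (y (j+1))) hci.eq).symm
        rw [h2, ih (j+1) (by omega)]
        have h3 : R ((R^i) (y (j+1+i))) = (R^(i+1)) (y (j+1+i)) := by rw [pow_succ']; rfl
        rw [h3]
        have h4 : j+1+i = j+(i+1) := by omega
        rw [h4]
    have hker : (A^mm) (y 0) = 0 := by
      have h := hpow mm 0 (by omega)
      rw [zero_add] at h
      rw [h, hymm, map_zero]
    have hcomm2 : Commute A' A := by
      rw [hA'def, hAdef]
      show (1 + z • R) * (1 - z • R) = (1 - z • R) * (1 + z • R)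
      rw [(aux_expand2 (z • R)).2, (aux_expand2 (z • R)).1]
    simp only [SetLike.mem_coe, LinearMap.mem_ker]
    have hx : x ∈ LinearMap.ker ((((1 : (H × H) →L[ℂ] (H × H)) - Kp)^mm : (H × H) →L[ℂ] (H × H)) : (H × H) →ₗ[ℂ] (H × H)) := by
      rw [LinearMap.mem_ker, hAA', hcomm2.mul_pow, ← hy0]
      show (A'^mm) ((A^mm) (y 0)) = 0
      rw [hker, map_zero]
    exact LinearMap.mem_ker.mp (hall mm hx)
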